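/- Under the hypotheses of the preceding lemma (a_0 ≤ a(x) ≤ a_1, v_0 ≤ V(x) ≤ v_1 on an interval of length L = β−α), the enclosure intervals [a_0 π² i²/L² + v_0, a_1 π² i²/L² + v_1] are pairwise disjoint for all eigenvalues below E′ provided v_1 − v_0 ≤ a_0 π²/L², v_1 − v_0 ≤ M² a_0 π²/L² − (M−1)² a_1 π²/L², where M is the smallest integer with E′ ≤ v_0 + M² a_0 π²/L². Precisely: for all integers 0 ≤ i < j ≤ M, the upper endpoint of the i-th interval is at most the lower endpoint of the j-th interval. -/
import Mathlib


open Real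

/-- Disjointness of the spectral enclosure intervals
`[a₀π²i²/L² + v₀, a₁π²i²/L² + v₁]`: if `v₁ − v₀ ≤ a₀π²/L²` and
`v₁ − v₀ ≤ M²a₀π²/L² − (M−1)²a₁π²/L²`, where `M` is the smallest positive integer with
`E′ ≤ v₀ + M²a₀π²/L²`, then for all `0 ≤ i < j ≤ M` the upper endpoint of the `i`-th
interval is at most the lower endpoint of the `j`-th interval. -/
theorem enclosure_intervals_disjoint
    (a0 a1 v0 v1 L E' : ℝ) (M : ℕ)
    (ha0 : 0 < a0) (haa : a0 ≤ a1) (hv : v0 ≤ v1) (hL : 0 < L)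
    (hMpos : 0 < M)
    (hME : E' ≤ v0 + (M : ℝ) ^ 2 * a0 * π ^ 2 / L ^ 2)
    (hMmin : ∀ k : ℕ, 0 < k → E' ≤ v0 + (k : ℝ) ^ 2 * a0 * π ^ 2 / L ^ 2 → M ≤ k)
    (h1 : v1 - v0 ≤ a0 * π ^ 2 / L ^ 2)
    (h2 : v1 - v0 ≤ (M : ℝ) ^ 2 * a0 * π ^ 2 / L ^ 2
      - ((M : ℝ) - 1) ^ 2 * a1 * π ^ 2 / L ^ 2) :
    ∀ i j : ℕ, i < j → j ≤ M →
      a1 * π ^ 2 * (i : ℝ) ^ 2 / L ^ 2 + v1 ≤ a0 * π ^ 2 * (j : ℝ) ^ 2 / L ^ 2 + v0 := by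
  intro i j hij hjM
  have hL2 : (0:ℝ) < L ^ 2 := by positivity
  have hπ : (0:ℝ) < π ^ 2 := by positivity
  -- clear denominators in hypotheses
  have hA : (v1 - v0) * L ^ 2 ≤ a0 * π ^ 2 := by
    rw [← le_div_iff₀ hL2]; exact h1
  have hB : (v1 - v0) * L ^ 2 ≤ ((M : ℝ) ^ 2 * a0 - ((M : ℝ) - 1) ^ 2 * a1) * π ^ 2 := by
    rw [← le_div_iff₀ hL2]; calc v1 - v0 ≤ _ := h2
      _ = _ := by ring
  -- cast arithmetic facts
  have hij' : (i : ℝ) + 1 ≤ (j : ℝ) := by exact_mod_cast hij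
  have hjM' : (j : ℝ) ≤ (M : ℝ) := by exact_mod_cast hjM
  have hiM : (i : ℝ) ≤ (M : ℝ) - 1 := by linarith
  have hi0 : (0:ℝ) ≤ (i : ℝ) := Nat.cast_nonneg i
  -- main inequality without denominators
  have key : a1 * π ^ 2 * (i : ℝ) ^ 2 + v1 * L ^ 2 ≤ a0 * π ^ 2 * (j : ℝ) ^ 2 + v0 * L ^ 2 := by
    have hconc : (0:ℝ) ≤ (a1 - a0) * ((i:ℝ) * (((M:ℝ) - 1) - i)) * π ^ 2 := by
      have := mul_nonneg (mul_nonneg (sub_nonneg.mpr haa)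
        (mul_nonneg hi0 (by linarith : (0:ℝ) ≤ ((M:ℝ) - 1) - i))) (le_of_lt hπ)
      linarith [this]
    have hjsq : a0 * π ^ 2 * (((j:ℝ))^2 - ((i:ℝ)+1)^2) ≥ 0 := by
      have h3 : (0:ℝ) ≤ ((j:ℝ) - (i+1)) * ((j:ℝ) + (i+1)) := by
        apply mul_nonneg <;> linarith
      nlinarith [mul_nonneg (mul_nonneg ha0.le hπ.le) h3]
    rcases Nat.lt_or_ge M 2 with hM1 | hM2
    · -- M = 1 : i = 0, j = 1
      have hie : i = 0 := by omega
      have hje : j = 1 := by omega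
      subst hie hje
      push_cast
      linarith [hA]
    · -- M ≥ 2, so N := M-1 ≥ 1
      have hN : (1:ℝ) ≤ (M:ℝ) - 1 := by
        have h4 : (2:ℝ) ≤ (M:ℝ) := by exact_mod_cast hM2
        linarith
      nlinarith [hA, hB, hjsq, hconc, mul_nonneg (mul_nonneg ha0.le hπ.le) hi0]
  -- back to the original form
  have e1 : a1 * π ^ 2 * (i : ℝ) ^ 2 / L ^ 2 + v1 = (a1 * π ^ 2 * (i : ℝ) ^ 2 + v1 * L ^ 2) / L ^ 2 := by
    field_simp
  have e2 : a0 * π ^ 2 * (j : ℝ) ^ 2 / L ^ 2 + v0 = (a0 * π ^ 2 * (j : ℝ) ^ 2 + v0 * L ^ 2) / L ^ 2 := by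
    field_simp
  rw [e1, e2]
  exact (div_le_div_iff_of_pos_right hL2).mpr key
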